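/- For r ∈ [0,1), ρ = 2−r, δ = 1−r, and k ≥ 1, the function φ_k(t) = t^{k−1}·e^{−(r/δ)t} satisfies the eigenvalue equation M_r φ_k = ρ^{−k} φ_k, where (M_r φ)(t) = (1/ρ)·e^{−(r/ρ)t}·φ(t/ρ). -/

import Mathlib

theorem stmt_12 (r : ℝ) (hr : r ∈ Set.Ico (0:ℝ) 1) (k : ℕ) (hk : 1 ≤ k) (t : ℝ) (ht : 0 < t) :
    (1 / (2 - r)) * Real.exp (-(r / (2 - r)) * t) *
        ((t / (2 - r)) ^ (k - 1) * Real.exp (-(r / (1 - r)) * (t / (2 - r))))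
      = (2 - r) ^ (-(k : ℤ)) * (t ^ (k - 1) * Real.exp (-(r / (1 - r)) * t)) := by
  obtain ⟨hr0, hr1⟩ := hr
  have hρ : (2 - r) ≠ 0 := by linarith
  have hδ : (1 - r) ≠ 0 := by linarith
  obtain ⟨m, rfl⟩ : ∃ m, k = m + 1 := ⟨k - 1, (Nat.succ_pred_eq_of_pos hk).symm⟩
  have hexp : Real.exp (-(r / (2 - r)) * t) * Real.exp (-(r / (1 - r)) * (t / (2 - r)))
      = Real.exp (-(r / (1 - r)) * t) := by
    rw [← Real.exp_add]
    congr 1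
    field_simp
    ring
  have hpow : (1 / (2 - r)) * (t / (2 - r)) ^ m = (2 - r) ^ (-((m : ℤ) + 1)) * t ^ m := by
    rw [zpow_neg, zpow_add₀ hρ, zpow_one, zpow_natCast, div_pow]
    field_simp
  simp only [Nat.add_sub_cancel, Nat.cast_add, Nat.cast_one] at *
  calc (1 / (2 - r)) * Real.exp (-(r / (2 - r)) * t) *
        ((t / (2 - r)) ^ m * Real.exp (-(r / (1 - r)) * (t / (2 - r))))
      = ((1 / (2 - r)) * (t / (2 - r)) ^ m) *
        (Real.exp (-(r / (2 - r)) * t) * Real.exp (-(r / (1 - r)) * (t / (2 - r)))) := by ring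
    _ = (2 - r) ^ (-((m : ℤ) + 1)) * t ^ m * Real.exp (-(r / (1 - r)) * t) := by
        rw [hexp, hpow]
    _ = (2 - r) ^ (-((m : ℤ) + 1)) * (t ^ m * Real.exp (-(r / (1 - r)) * t)) := by ring
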